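/- Let 2 ≤ e ≤ m be integers. Then the family {[S] : S ∈ C(m,e)} is a partition of L(m,e): every numerical semigroup with multiplicity m and embedding dimension e belongs to [S] for some packed S ∈ C(m,e), each class [S] is nonempty, and if S, T ∈ C(m,e) with S ≠ T then [S] ∩ [T] = ∅. -/

import Mathlib

open scoped Pointwise

/-- A numerical semigroup: an additive submonoid of ℕ with finite complement. -/
def IsNumericalSemigroup (S : Set ℕ) : Prop :=
  0 ∈ S ∧ (∀ a ∈ S, ∀ b ∈ S, a + b ∈ S) ∧ Sᶜ.Finite

/-- Multiplicity: the least positive element. -/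
noncomputable def mult (S : Set ℕ) : ℕ := sInf (S \ {0})

/-- Minimal system of generators: (S∖{0}) ∖ ((S∖{0})+(S∖{0})). -/
def msg (S : Set ℕ) : Set ℕ := (S \ {0}) \ ((S \ {0}) + (S \ {0}))

/-- Embedding dimension: cardinality of the minimal system of generators. -/
noncomputable def edim (S : Set ℕ) : ℕ := (msg S).ncard

/-- The submonoid of (ℕ,+) generated by a set, as a set. -/
def genSet (B : Set ℕ) : Set ℕ := (AddSubmonoid.closure B : Set ℕ)

/-- Packed numerical semigroup: msg(S) ⊆ {m(S),…,2m(S)−1}. -/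
def IsPacked (S : Set ℕ) : Prop := msg S ⊆ Set.Icc (mult S) (2 * mult S - 1)

/-- L(m,e): numerical semigroups with multiplicity m and embedding dimension e. -/
def Lset (m e : ℕ) : Set (Set ℕ) :=
  {S | IsNumericalSemigroup S ∧ mult S = m ∧ edim S = e}

/-- C(m,e): packed numerical semigroups in L(m,e). -/
def Cset (m e : ℕ) : Set (Set ℕ) := {S ∈ Lset m e | IsPacked S}

/-- φ(S): the monoid generated by {m + (x mod m) : x ∈ msg(S)}, m = mult S. -/
noncomputable def phi (S : Set ℕ) : Set ℕ :=
  genSet ((fun x => mult S + x % mult S) '' msg S)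

/-- The class [S] = {T ∈ L(m,e) : φ(T) = φ(S)}. -/
def classOf (m e : ℕ) (S : Set ℕ) : Set (Set ℕ) := {T ∈ Lset m e | phi T = phi S}

/-- Frobenius number: the largest element of the complement. -/
noncomputable def Frob (S : Set ℕ) : ℕ := sSup Sᶜ

/-- Genus: the cardinality of the complement. -/
noncomputable def genus (S : Set ℕ) : ℕ := Sᶜ.ncard

/-- The Apéry set of n in S. -/
def Ap (S : Set ℕ) (n : ℕ) : Set ℕ := {s ∈ S | ¬ ∃ t ∈ S, s = t + n}

/-- Minimal elements of a set in a partial order. -/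
def minimalsOf {β : Type*} [PartialOrder β] (X : Set β) : Set β :=
  {x ∈ X | ∀ y ∈ X, y ≤ x → y = x}

section Aux

variable {S T B : Set ℕ}

lemma genSet_zero (B : Set ℕ) : (0:ℕ) ∈ genSet B := (AddSubmonoid.closure B).zero_mem

lemma genSet_add {a b : ℕ} (ha : a ∈ genSet B) (hb : b ∈ genSet B) :
    a + b ∈ genSet B := (AddSubmonoid.closure B).add_mem ha hb

lemma subset_genSet (B : Set ℕ) : B ⊆ genSet B := AddSubmonoid.subset_closure

lemma genSet_induction {p : ℕ → Prop} (mem : ∀ x ∈ B, p x) (zero : p 0)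
    (add : ∀ x y, p x → p y → p (x + y)) {x : ℕ} (hx : x ∈ genSet B) : p x :=
  AddSubmonoid.closure_induction (motive := fun x _ => p x) mem zero (fun x y _ _ => add x y) hx

lemma genSet_min {m : ℕ} (hB : ∀ b ∈ B, m ≤ b) {x : ℕ} (hx : x ∈ genSet B) :
    x = 0 ∨ m ≤ x := by
  refine genSet_induction (p := fun y => y = 0 ∨ m ≤ y) (fun y hy => Or.inr (hB y hy)) (Or.inl rfl) ?_ hx
  rintro a b (rfl | ha) (rfl | hb) <;> omega

lemma genSet_nsmul {m k : ℕ} (hm : m ∈ genSet B) : k * m ∈ genSet B := by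
  induction k with
  | zero => simpa using genSet_zero B
  | succ n ih => have := genSet_add ih hm; rw [Nat.succ_mul]; exact this

lemma mult_spec (hS : IsNumericalSemigroup S) : mult S ∈ S \ {0} := by
  apply Nat.sInf_mem
  have hfin : (Sᶜ ∪ {0}).Finite := hS.2.2.union (Set.finite_singleton 0)
  obtain ⟨n, hn⟩ := hfin.infinite_compl.nonempty
  simp only [Set.mem_compl_iff, Set.mem_union, Set.mem_singleton_iff, not_or] at hn
  exact ⟨n, by simpa using ⟨not_not.mp hn.1, hn.2⟩⟩

lemma mult_pos (hS : IsNumericalSemigroup S) : 0 < mult S := by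
  have := mult_spec hS; simp only [Set.mem_diff, Set.mem_singleton_iff] at this; omega

lemma mult_le (hS : IsNumericalSemigroup S) {x : ℕ} (hx : x ∈ S \ {0}) : mult S ≤ x :=
  Nat.sInf_le hx

lemma mult_mem_msg (hS : IsNumericalSemigroup S) : mult S ∈ msg S := by
  refine ⟨mult_spec hS, ?_⟩
  rintro hsum
  rcases Set.mem_add.mp hsum with ⟨a, ha, b, hb, hab⟩
  have h1 := mult_le hS ha
  have h2 := mult_le hS hb
  have := mult_pos hS
  omega

lemma genSet_msg (hS : IsNumericalSemigroup S) : genSet (msg S) = S := by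
  apply Set.Subset.antisymm
  · intro x hx
    exact genSet_induction (fun y hy => hy.1.1) hS.1 (fun a b ha hb => hS.2.1 a ha b hb) hx
  · have key : ∀ x, x ∈ S → x ∈ genSet (msg S) := by
      intro x
      induction x using Nat.strong_induction_on with
      | _ x ih =>
        intro hx
        rcases eq_or_ne x 0 with rfl | h0
        · exact genSet_zero _
        by_cases hm : x ∈ msg S
        · exact subset_genSet _ hm
        · have hx' : x ∈ (S \ {0}) + (S \ {0}) := by
            by_contra h
            exact hm ⟨⟨hx, h0⟩, h⟩
          rcases Set.mem_add.mp hx' with ⟨a, ha, b, hb, hab⟩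
          simp only [Set.mem_diff, Set.mem_singleton_iff] at ha hb
          have hax : a < x := by omega
          have hbx : b < x := by omega
          rw [← hab]
          exact genSet_add (ih a hax ha.1) (ih b hbx hb.1)
    exact fun x hx => key x hx

lemma mult_genSet {m : ℕ} (hm : 0 < m) (hmB : m ∈ B) (hB : ∀ b ∈ B, m ≤ b) :
    mult (genSet B) = m := by
  apply le_antisymm
  · exact Nat.sInf_le ⟨subset_genSet B hmB, by simp; omega⟩
  · apply le_csInf (Set.nonempty_of_mem (show m ∈ genSet B \ {0} from ⟨subset_genSet B hmB, by simp; omega⟩))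
    intro x hx
    simp only [Set.mem_diff, Set.mem_singleton_iff] at hx
    rcases genSet_min hB hx.1 with h | h
    · exact absurd h hx.2
    · exact h

lemma msg_genSet {m : ℕ} (hm : 0 < m) (hmB : m ∈ B) (hB : ∀ b ∈ B, m ≤ b ∧ b < 2 * m) :
    msg (genSet B) = B := by
  have hBlo : ∀ b ∈ B, m ≤ b := fun b hb => (hB b hb).1
  have decomp : ∀ x ∈ genSet B,
      x = 0 ∨ x ∈ B ∨ x ∈ (genSet B \ {0}) + (genSet B \ {0}) := by
    intro x hx
    refine genSet_induction (p := fun y => y = 0 ∨ y ∈ B ∨ y ∈ (genSet B \ {0}) + (genSet B \ {0})) (fun y hy => Or.inr (Or.inl hy)) (Or.inl rfl) ?_ hx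
    intro a b ha hb
    have key : ∀ c, (c = 0 ∨ c ∈ B ∨ c ∈ (genSet B \ {0}) + (genSet B \ {0})) →
        c ≠ 0 → c ∈ genSet B \ {0} := by
      rintro c (rfl | hc | hc) hc0
      · exact absurd rfl hc0
      · exact ⟨subset_genSet B hc, hc0⟩
      · rcases Set.mem_add.mp hc with ⟨u, hu, v, hv, huv⟩
        exact ⟨huv ▸ genSet_add hu.1 hv.1, hc0⟩
    rcases eq_or_ne a 0 with rfl | ha0
    · simpa using hb
    rcases eq_or_ne b 0 with rfl | hb0
    · simpa using ha
    exact Or.inr (Or.inr (Set.mem_add.mpr ⟨a, key a ha ha0, b, key b hb hb0, rfl⟩))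
  apply Set.Subset.antisymm
  · intro x hx
    rcases decomp x hx.1.1 with rfl | h | h
    · exact absurd rfl (by simpa using hx.1.2 : ¬(0:ℕ) = 0)
    · exact h
    · exact absurd h hx.2
  · intro b hb
    have hb2 := hB b hb
    refine ⟨⟨subset_genSet B hb, by simp; omega⟩, ?_⟩
    rintro hsum
    rcases Set.mem_add.mp hsum with ⟨u, hu, v, hv, huv⟩
    simp only [Set.mem_diff, Set.mem_singleton_iff] at hu hv
    have h1 := (genSet_min hBlo hu.1).resolve_left hu.2
    have h2 := (genSet_min hBlo hv.1).resolve_left hv.2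
    omega

lemma packed_image (hS : IsNumericalSemigroup S) (hP : IsPacked S) :
    (fun x => mult S + x % mult S) '' msg S = msg S := by
  have hm := mult_pos hS
  have : ∀ x ∈ msg S, mult S + x % mult S = x := by
    intro x hx
    have hx2 := hP hx
    simp only [Set.mem_Icc] at hx2
    have hlt : x < 2 * mult S := by omega
    have h1 : x % mult S = x - mult S := by
      rw [Nat.mod_eq_sub_mod hx2.1, Nat.mod_eq_of_lt (by omega)]
    omega
  rw [Set.image_congr this, Set.image_id']

lemma phi_packed (hS : IsNumericalSemigroup S) (hP : IsPacked S) : phi S = S := by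
  rw [phi, packed_image hS hP, genSet_msg hS]

lemma msg_mod_injOn (hS : IsNumericalSemigroup S) :
    Set.InjOn (fun x => x % mult S) (msg S) := by
  have hm := mult_pos hS
  have hmem := mult_spec hS
  have key : ∀ a b, a ∈ msg S → b ∈ msg S → a < b → a % mult S = b % mult S → False := by
    intro a b ha hb hab hmod
    have hdvd : mult S ∣ b - a := (Nat.modEq_iff_dvd' (le_of_lt hab)).mp hmod
    obtain ⟨k, hk⟩ := hdvd
    have hk1 : 1 ≤ k := by
      rcases Nat.eq_zero_or_pos k with rfl | h
      · omega
      · exact h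
    have hkm : mult S * k ∈ S := by
      have := genSet_nsmul (B := msg S) (k := k) (subset_genSet _ (mult_mem_msg hS))
      rw [genSet_msg hS] at this
      rw [mul_comm]; exact this
    apply hb.2
    refine Set.mem_add.mpr ⟨a, ?_, mult S * k, ?_, by omega⟩
    · exact ha.1
    · refine ⟨hkm, ?_⟩
      simp only [Set.mem_singleton_iff]
      have : 1 ≤ mult S * k := Nat.one_le_iff_ne_zero.mpr (by positivity)
      omega
  intro a ha b hb hmod
  rcases lt_trichotomy a b with h | h | h
  · exact absurd (key a b ha hb h hmod) (fun h => h)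
  · exact h
  · exact absurd (key b a hb ha h hmod.symm) (fun h => h)

lemma large_mem (hS : IsNumericalSemigroup S) : ∃ N, ∀ n, N ≤ n → n ∈ S := by
  obtain ⟨N, hN⟩ := hS.2.2.bddAbove
  refine ⟨N + 1, fun n hn => ?_⟩
  by_contra h
  have := hN h
  omega

lemma phi_mem_Cset {m e : ℕ} (hm : 2 ≤ m) (hT : T ∈ Lset m e) : phi T ∈ Cset m e := by
  obtain ⟨hTs, hmu, hed⟩ := hT
  have hm0 : 0 < m := by omega
  set B : Set ℕ := (fun x => mult T + x % mult T) '' msg T with hBdef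
  have hphi : phi T = genSet B := rfl
  have hBrange : ∀ b ∈ B, m ≤ b ∧ b < 2 * m := by
    rintro b ⟨x, hx, rfl⟩
    have := Nat.mod_lt x (y := mult T) (by omega)
    dsimp only
    omega
  have hmB : m ∈ B := by
    rw [hBdef]
    exact ⟨mult T, mult_mem_msg hTs, by simp [Nat.mod_self, hmu]⟩
  have hBlo : ∀ b ∈ B, m ≤ b := fun b hb => (hBrange b hb).1
  -- residue representatives
  have hres : ∀ x ∈ T, ∃ s ∈ genSet B, s % m = x % m := by
    have hTgen : T = genSet (msg T) := (genSet_msg hTs).symm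
    intro x hx
    rw [hTgen] at hx
    refine genSet_induction (p := fun y => ∃ s ∈ genSet B, s % m = y % m) ?_ ⟨0, genSet_zero B, rfl⟩ ?_ hx
    · intro y hy
      refine ⟨mult T + y % mult T, subset_genSet B ⟨y, hy, rfl⟩, ?_⟩
      rw [hmu, Nat.add_mod_left, Nat.mod_mod_of_dvd y dvd_rfl]
    · rintro a b ⟨s, hs, hsm⟩ ⟨t, ht, htm⟩
      refine ⟨s + t, genSet_add hs ht, ?_⟩
      rw [Nat.add_mod, hsm, htm, ← Nat.add_mod]
  have hrep : ∀ r : ℕ, ∃ s, s ∈ genSet B ∧ s % m = r % m := by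
    intro r
    obtain ⟨N, hN⟩ := large_mem hTs
    have hnT : r + (N + 1) * m ∈ T := hN _ (by nlinarith)
    obtain ⟨s, hs, hsm⟩ := hres _ hnT
    exact ⟨s, hs, by rw [hsm, Nat.add_mul_mod_self_right]⟩
  choose g hg1 hg2 using hrep
  have hns : IsNumericalSemigroup (genSet B) := by
    refine ⟨genSet_zero B, fun a ha b hb => genSet_add ha hb, ?_⟩
    set K := (Finset.range m).sup g with hK
    apply Set.Finite.subset (Set.finite_Iio K)
    intro n hn
    simp only [Set.mem_compl_iff] at hn
    by_contra hnK
    apply hn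
    simp only [Set.mem_Iio, not_lt] at hnK
    have hr : n % m < m := Nat.mod_lt n hm0
    have hgK : g (n % m) ≤ K := Finset.le_sup (Finset.mem_range.mpr hr)
    have hgm : g (n % m) % m = n % m := by
      rw [hg2, Nat.mod_mod_of_dvd n dvd_rfl]
    have hle : g (n % m) ≤ n := le_trans hgK hnK
    have hdvd : m ∣ n - g (n % m) := by
      apply (Nat.modEq_iff_dvd' hle).mp
      unfold Nat.ModEq
      rw [hgm]
    obtain ⟨k, hk⟩ := hdvd
    rw [mul_comm] at hk
    have : n = g (n % m) + k * m := by omega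
    rw [this]
    exact genSet_add (hg1 _) (genSet_nsmul (subset_genSet B hmB))
  have hmult : mult (genSet B) = m := mult_genSet hm0 hmB hBlo
  have hmsg : msg (genSet B) = B := msg_genSet hm0 hmB hBrange
  have hedim : edim (genSet B) = e := by
    rw [edim, hmsg, hBdef, Set.ncard_image_of_injOn, ← edim, hed]
    intro a ha b hb hfab
    dsimp only at hfab
    exact msg_mod_injOn hTs ha hb (show a % mult T = b % mult T by omega)
  refine ⟨⟨hns, hmult, hedim⟩, ?_⟩
  intro x hx
  rw [hphi] at hx ⊢
  rw [hmsg] at hx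
  have := hBrange x hx
  simp only [Set.mem_Icc, hmult]
  omega

end Aux

/-- {[S] : S ∈ C(m,e)} is a partition of L(m,e). -/
theorem stmt2 (m e : ℕ) (h2 : 2 ≤ e) (hem : e ≤ m) :
    (∀ T ∈ Lset m e, ∃ S ∈ Cset m e, T ∈ classOf m e S) ∧
    (∀ S ∈ Cset m e, (classOf m e S).Nonempty) ∧
    (∀ S ∈ Cset m e, ∀ T ∈ Cset m e, S ≠ T → classOf m e S ∩ classOf m e T = ∅) := by
  have hm : 2 ≤ m := le_trans h2 hem
  have hfix : ∀ S ∈ Cset m e, phi S = S := fun S hS => phi_packed hS.1.1 hS.2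
  refine ⟨?_, ?_, ?_⟩
  · intro T hT
    have hC := phi_mem_Cset hm hT
    exact ⟨phi T, hC, hT, (hfix _ hC).symm⟩
  · intro S hS
    exact ⟨S, hS.1, rfl⟩
  · intro S hS T hT hne
    rw [Set.eq_empty_iff_forall_notMem]
    rintro U ⟨hU1, hU2⟩
    apply hne
    rw [← hfix S hS, ← hfix T hT, ← hU1.2, ← hU2.2]
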